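/- Let p, q ≥ 1 and let A ⊆ M_p(ℂ) and B ⊆ M_q(ℂ) be unital subalgebras. Inside M_p(ℂ) ⊗ M_q(ℂ), realized as the algebra of complex matrices indexed by Fin p × Fin q via the Kronecker product, the centralizer of the subalgebra generated by { a ⊗ₖ b : a ∈ A, b ∈ B } equals the subalgebra generated by { a′ ⊗ₖ b′ : a′ ∈ centralizer(A), b′ ∈ centralizer(B) }, where centralizer(A) is taken in M_p(ℂ) and centralizer(B) in M_q(ℂ). -/

import Mathlib

open Matrix Kronecker

/-- the finite-dimensional commutation theorem for tensor products: inside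
`M_p(ℂ) ⊗ M_q(ℂ)` realized via the Kronecker product, the centralizer of the subalgebra
generated by `{a ⊗ₖ b : a ∈ A, b ∈ B}` is the subalgebra generated by the Kronecker
products of the centralizers. -/
theorem statement5 (p q : ℕ) (hp : 1 ≤ p) (hq : 1 ≤ q)
    (A : Subalgebra ℂ (Matrix (Fin p) (Fin p) ℂ))
    (B : Subalgebra ℂ (Matrix (Fin q) (Fin q) ℂ)) :
    Subalgebra.centralizer ℂ
        ((Algebra.adjoin ℂ
            {x : Matrix (Fin p × Fin q) (Fin p × Fin q) ℂ |
              ∃ a ∈ A, ∃ b ∈ B, x = a ⊗ₖ b} :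
          Subalgebra ℂ (Matrix (Fin p × Fin q) (Fin p × Fin q) ℂ)) :
          Set (Matrix (Fin p × Fin q) (Fin p × Fin q) ℂ)) =
      Algebra.adjoin ℂ
        {x : Matrix (Fin p × Fin q) (Fin p × Fin q) ℂ |
          ∃ a' ∈ Subalgebra.centralizer ℂ (A : Set (Matrix (Fin p) (Fin p) ℂ)),
            ∃ b' ∈ Subalgebra.centralizer ℂ (B : Set (Matrix (Fin q) (Fin q) ℂ)),
              x = a' ⊗ₖ b'} := by
  apply le_antisymm
  · -- hard direction
    intro x hx
    have hx' : ∀ g ∈ Algebra.adjoin ℂ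
        {x : Matrix (Fin p × Fin q) (Fin p × Fin q) ℂ |
          ∃ a ∈ A, ∃ b ∈ B, x = a ⊗ₖ b}, g * x = x * g := fun g hg =>
      (Subalgebra.mem_centralizer_iff ℂ).mp hx g hg
    -- the slices over the second factor
    set P : Fin q → Fin q → Matrix (Fin p) (Fin p) ℂ :=
      fun k l => Matrix.of fun i j => x (i, k) (j, l) with hPdef
    -- each slice lies in the centralizer of A
    have hP : ∀ k l, P k l ∈ Subalgebra.centralizer ℂ (A : Set (Matrix (Fin p) (Fin p) ℂ)) := by
      intro k l
      rw [Subalgebra.mem_centralizer_iff]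
      intro a ha
      have hax : (a ⊗ₖ (1 : Matrix (Fin q) (Fin q) ℂ)) * x = x * (a ⊗ₖ 1) :=
        hx' _ (Algebra.subset_adjoin ⟨a, ha, 1, B.one_mem, rfl⟩)
      ext i j
      have h := congrFun (congrFun hax (i, k)) (j, l)
      simp only [Matrix.mul_apply, Fintype.sum_prod_type, Matrix.kroneckerMap_apply,
        Matrix.one_apply, mul_ite, mul_one, mul_zero, ite_mul, one_mul, zero_mul,
        Finset.sum_ite_eq, Finset.sum_ite_eq', Finset.mem_univ, if_true] at h
      simpa [Matrix.mul_apply, hPdef] using h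
    -- the key exchange relation coming from commuting with `1 ⊗ₖ b`
    have hrel : ∀ b ∈ B, ∀ k l,
        (∑ m, b k m • P m l) = ∑ m, b m l • P k m := by
      intro b hb k l
      have hbx : ((1 : Matrix (Fin p) (Fin p) ℂ) ⊗ₖ b) * x = x * (1 ⊗ₖ b) :=
        hx' _ (Algebra.subset_adjoin ⟨1, A.one_mem, b, hb, rfl⟩)
      ext i j
      have h := congrFun (congrFun hbx (i, k)) (j, l)
      simp only [Matrix.mul_apply, Fintype.sum_prod_type_right, Matrix.kroneckerMap_apply,
        Matrix.one_apply, mul_ite, mul_one, mul_zero, ite_mul, one_mul, zero_mul,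
        Finset.sum_ite_eq, Finset.sum_ite_eq', Finset.mem_univ, if_true] at h
      simp only [Matrix.sum_apply, Matrix.smul_apply, smul_eq_mul, hPdef, Matrix.of_apply]
      calc ∑ m, b k m * x (i, m) (j, l) = ∑ m, x (i, k) (j, m) * b m l := h
        _ = ∑ m, b m l * x (i, k) (j, m) := by simp [mul_comm]
    -- pass to the submodule and pick a basis
    set V : Submodule ℂ (Matrix (Fin p) (Fin p) ℂ) :=
      Subalgebra.toSubmodule (Subalgebra.centralizer ℂ (A : Set (Matrix (Fin p) (Fin p) ℂ)))
      with hVdef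
    have := Module.Finite.of_injective V.subtype Subtype.val_injective
    let bA : Module.Basis (Fin (Module.finrank ℂ V)) ℂ V := Module.finBasis ℂ V
    set v : Fin q → Fin q → V := fun k l => ⟨P k l, (Subalgebra.mem_toSubmodule _).mpr (hP k l)⟩
      with hvdef
    set c : Fin (Module.finrank ℂ V) → Fin q → Fin q → ℂ :=
      fun s k l => bA.repr (v k l) s with hcdef
    set b' : Fin (Module.finrank ℂ V) → Matrix (Fin q) (Fin q) ℂ :=
      fun s => Matrix.of fun k l => c s k l with hb'def
    -- each `b' s` lies in the centralizer of B
    have hb' : ∀ s, b' s ∈ Subalgebra.centralizer ℂ (B : Set (Matrix (Fin q) (Fin q) ℂ)) := by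
      intro s
      rw [Subalgebra.mem_centralizer_iff]
      intro b hb
      ext k l
      have key : (∑ m, b k m • v m l) = ∑ m, b m l • v k m := by
        apply Subtype.ext
        push_cast
        exact hrel b hb k l
      have h := congrArg (fun w : V => bA.repr w s) key
      simp only [map_sum, _root_.map_smul, Finsupp.smul_apply, Finsupp.coe_smul, Finsupp.coe_finset_sum, Finset.sum_apply,
        Pi.smul_apply, smul_eq_mul] at h
      simp only [Matrix.mul_apply, hb'def, Matrix.of_apply, hcdef]
      calc ∑ m, b k m * bA.repr (v m l) s = ∑ m, b m l * bA.repr (v k m) s := h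
        _ = ∑ m, bA.repr (v k m) s * b m l := by simp [mul_comm]
    -- decompose x
    have hsum : x = ∑ s, ((bA s : Matrix (Fin p) (Fin p) ℂ)) ⊗ₖ b' s := by
      ext ⟨i, k⟩ ⟨j, l⟩
      have hv := bA.sum_repr (v k l)
      have h := congrArg (fun w : V => (w : Matrix (Fin p) (Fin p) ℂ) i j) hv
      push_cast at h
      simp only [Matrix.sum_apply, Matrix.smul_apply, smul_eq_mul] at h
      simp only [Matrix.sum_apply, Matrix.kroneckerMap_apply, hb'def, Matrix.of_apply, hcdef]
      calc x (i, k) (j, l) = ((v k l : V) : Matrix (Fin p) (Fin p) ℂ) i j := by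
            simp [hvdef, hPdef]
        _ = ∑ s, bA.repr (v k l) s * ((bA s : V) : Matrix (Fin p) (Fin p) ℂ) i j := h.symm
        _ = ∑ s, ((bA s : V) : Matrix (Fin p) (Fin p) ℂ) i j * bA.repr (v k l) s := by
            simp [mul_comm]
    rw [hsum]
    refine Subalgebra.sum_mem _ fun s _ => Algebra.subset_adjoin ?_
    exact ⟨(bA s : V), (Subalgebra.mem_toSubmodule _).mp (bA s).2, b' s, hb' s, rfl⟩
  · -- easy direction
    rw [Algebra.adjoin_le_iff]
    rintro _ ⟨a', ha', b', hb', rfl⟩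
    rw [SetLike.mem_coe, Subalgebra.mem_centralizer_iff]
    intro m hm
    rw [SetLike.mem_coe] at hm
    induction hm using Algebra.adjoin_induction with
    | mem g hg =>
        obtain ⟨a, ha, b, hb, rfl⟩ := hg
        rw [← Matrix.mul_kronecker_mul, ← Matrix.mul_kronecker_mul,
          ha' a ha, hb' b hb]
    | algebraMap r =>
        simp [Algebra.commutes]
    | add u w hu hw ihu ihw => rw [add_mul, mul_add, ihu, ihw]
    | mul u w hu hw ihu ihw => rw [mul_assoc, ihw, ← mul_assoc, ihu, mul_assoc]
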